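/- For all nonnegative integers n and \ell, real numbers m, r, x, the r-Dowling polynomials satisfy D_{m,r}(n+\ell; x) = \sum_{j=0}^{\ell} \sum_{k=0}^{n} W_{m,r}(\ell, j) \binom{n}{k} (mj)^{n-k} D_{m,r}(k; x) x^j. -/

import Mathlib

/-- The r-Whitney numbers of the second kind, defined by the triangular recurrence
`W m r n k = W m r (n-1) (k-1) + (m*k+r) * W m r (n-1) k`, with `W m r 0 0 = 1`
and vanishing for `k > n` (and for "k < 0", encoded by the `n+1, 0` case). -/
noncomputable def rWhitney (m r : ℝ) : ℕ → ℕ → ℝ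
  | 0, 0 => 1
  | 0, _ + 1 => 0
  | n + 1, 0 => r * rWhitney m r n 0
  | n + 1, k + 1 => rWhitney m r n k + (m * (k + 1) + r) * rWhitney m r n (k + 1)
/-- The r-Dowling polynomial: the sum over k ≤ n of `W m r n k * x^k`. -/
noncomputable def rDowling (m r : ℝ) (n : ℕ) (x : ℝ) : ℝ :=
  ∑ k ∈ Finset.range (n + 1), rWhitney m r n k * x ^ k

lemma rWhitney_keyA (m r : ℝ) : ∀ k j, rWhitney m r k j + m * (j + 1) * rWhitney m r k (j + 1)
    = ∑ i ∈ Finset.range (k + 1), (k.choose i : ℝ) * m ^ (k - i) * rWhitney m r i j := by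
  intro k
  induction k with
  | zero =>
    intro j
    cases j with
    | zero => simp [rWhitney]
    | succ j => simp [rWhitney]
  | succ k ih =>
    have e1 : ∀ j, ∑ i ∈ Finset.range (k + 2), (k.choose i : ℝ) * m ^ (k + 1 - i) * rWhitney m r i j
        = m * ∑ i ∈ Finset.range (k + 1), (k.choose i : ℝ) * m ^ (k - i) * rWhitney m r i j := by
      intro j
      rw [Finset.sum_range_succ, Nat.choose_succ_self, Finset.mul_sum]
      push_cast
      rw [zero_mul, zero_mul, add_zero]
      refine Finset.sum_congr rfl fun i hi => ?_
      rw [Finset.mem_range] at hi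
      rw [show k + 1 - i = (k - i) + 1 by omega, pow_succ]
      ring
    intro j
    have main : ∑ i ∈ Finset.range (k + 2), ((k+1).choose i : ℝ) * m ^ (k + 1 - i) * rWhitney m r i j
        = (∑ i ∈ Finset.range (k + 1), (k.choose i : ℝ) * m ^ (k - i) * rWhitney m r (i+1) j)
          + m * ∑ i ∈ Finset.range (k + 1), (k.choose i : ℝ) * m ^ (k - i) * rWhitney m r i j := by
      calc ∑ i ∈ Finset.range (k + 2), ((k+1).choose i : ℝ) * m ^ (k + 1 - i) * rWhitney m r i j
          = (∑ i ∈ Finset.range (k + 1), ((k+1).choose (i+1) : ℝ) * m ^ (k + 1 - (i+1)) * rWhitney m r (i+1) j)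
            + ((k+1).choose 0 : ℝ) * m ^ (k + 1 - 0) * rWhitney m r 0 j :=
            Finset.sum_range_succ' _ (k+1)
        _ = (∑ i ∈ Finset.range (k + 1), ((k.choose i : ℝ) * m ^ (k - i) * rWhitney m r (i+1) j
              + (k.choose (i+1) : ℝ) * m ^ (k + 1 - (i+1)) * rWhitney m r (i+1) j))
            + (k.choose 0 : ℝ) * m ^ (k + 1 - 0) * rWhitney m r 0 j := by
            rw [Nat.choose_zero_right, Nat.choose_zero_right]
            refine congrArg (· + _) (Finset.sum_congr rfl fun i hi => ?_)
            rw [Nat.choose_succ_succ, Nat.succ_sub_succ]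
            push_cast
            ring
        _ = (∑ i ∈ Finset.range (k + 1), (k.choose i : ℝ) * m ^ (k - i) * rWhitney m r (i+1) j)
            + ((∑ i ∈ Finset.range (k + 1), (k.choose (i+1) : ℝ) * m ^ (k + 1 - (i+1)) * rWhitney m r (i+1) j)
              + (k.choose 0 : ℝ) * m ^ (k + 1 - 0) * rWhitney m r 0 j) := by
            rw [Finset.sum_add_distrib]; ring
        _ = (∑ i ∈ Finset.range (k + 1), (k.choose i : ℝ) * m ^ (k - i) * rWhitney m r (i+1) j)
            + ∑ i ∈ Finset.range (k + 2), (k.choose i : ℝ) * m ^ (k + 1 - i) * rWhitney m r i j := by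
            rw [← Finset.sum_range_succ' (fun i => (k.choose i : ℝ) * m ^ (k + 1 - i) * rWhitney m r i j) (k+1)]
        _ = (∑ i ∈ Finset.range (k + 1), (k.choose i : ℝ) * m ^ (k - i) * rWhitney m r (i+1) j)
            + m * ∑ i ∈ Finset.range (k + 1), (k.choose i : ℝ) * m ^ (k - i) * rWhitney m r i j := by
            rw [e1]
    rw [main]
    cases j with
    | zero =>
      have h0 : ∀ i, rWhitney m r (i+1) 0 = r * rWhitney m r i 0 := fun i => rfl
      simp only [h0]
      have : ∑ i ∈ Finset.range (k + 1), (k.choose i : ℝ) * m ^ (k - i) * (r * rWhitney m r i 0)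
          = r * ∑ i ∈ Finset.range (k + 1), (k.choose i : ℝ) * m ^ (k - i) * rWhitney m r i 0 := by
        rw [Finset.mul_sum]; exact Finset.sum_congr rfl fun i _ => by ring
      rw [this, ← ih 0,
        show rWhitney m r (k+1) (0+1) = rWhitney m r k 0 + (m * (((0:ℕ):ℝ) + 1) + r) * rWhitney m r k (0+1) from rfl]
      push_cast
      ring
    | succ j' =>
      have h0 : ∀ i, rWhitney m r (i+1) (j'+1)
          = rWhitney m r i j' + (m * (j' + 1) + r) * rWhitney m r i (j'+1) := fun i => rfl
      simp only [h0]
      have : ∑ i ∈ Finset.range (k + 1), (k.choose i : ℝ) * m ^ (k - i) *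
            (rWhitney m r i j' + (m * (j' + 1) + r) * rWhitney m r i (j'+1))
          = (∑ i ∈ Finset.range (k + 1), (k.choose i : ℝ) * m ^ (k - i) * rWhitney m r i j')
            + (m * (j' + 1) + r) * ∑ i ∈ Finset.range (k + 1), (k.choose i : ℝ) * m ^ (k - i) * rWhitney m r i (j'+1) := by
        rw [Finset.mul_sum, ← Finset.sum_add_distrib]
        exact Finset.sum_congr rfl fun i _ => by ring
      rw [this, ← ih j', ← ih (j'+1),
        show rWhitney m r (k+1) (j'+1+1) = rWhitney m r k (j'+1) + (m * (((j'+1:ℕ):ℝ) + 1) + r) * rWhitney m r k (j'+1+1) from rfl]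
      push_cast
      ring

lemma rWhitney_zero_of_lt (m r : ℝ) : ∀ n k, n < k → rWhitney m r n k = 0 := by
  intro n
  induction n with
  | zero => intro k hk; obtain ⟨k, rfl⟩ := Nat.exists_eq_add_of_lt hk; simp [rWhitney]
  | succ n ih =>
    intro k hk
    obtain ⟨k', rfl⟩ : ∃ k', k = k' + 1 := ⟨k - 1, by omega⟩
    rw [show rWhitney m r (n+1) (k'+1) = rWhitney m r n k' + (m * (↑k' + 1) + r) * rWhitney m r n (k' + 1) from rfl]
    rw [ih k' (by omega), ih (k'+1) (by omega)]
    ring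

lemma rDowling_trunc (m r x : ℝ) {i k : ℕ} (h : i ≤ k) :
    ∑ j ∈ Finset.range (k+1), rWhitney m r i j * x ^ j = rDowling m r i x := by
  rw [rDowling]
  symm
  apply Finset.sum_subset
  · intro j hj; rw [Finset.mem_range] at *; omega
  · intro j _ hj
    rw [Finset.mem_range] at hj
    rw [rWhitney_zero_of_lt m r i j (by omega), zero_mul]

lemma rDowling_succ (m r x : ℝ) (k : ℕ) :
    rDowling m r (k+1) x = r * rDowling m r k x
      + x * ∑ i ∈ Finset.range (k+1), (k.choose i : ℝ) * m ^ (k-i) * rDowling m r i x := by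
  have hW : ∀ j : ℕ, rWhitney m r (k+1) (j+1)
      = (∑ i ∈ Finset.range (k+1), (k.choose i : ℝ) * m ^ (k-i) * rWhitney m r i j)
        + r * rWhitney m r k (j+1) := by
    intro j
    have h1 := rWhitney_keyA m r k j
    have hdef : rWhitney m r (k+1) (j+1)
        = rWhitney m r k j + (m * ((j:ℝ)+1) + r) * rWhitney m r k (j+1) := rfl
    rw [hdef, ← h1]; ring
  rw [rDowling]
  calc ∑ j ∈ Finset.range (k+1+1), rWhitney m r (k+1) j * x ^ j
      = (∑ j ∈ Finset.range (k+1), rWhitney m r (k+1) (j+1) * x^(j+1))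
        + rWhitney m r (k+1) 0 * x^0 := Finset.sum_range_succ' _ (k+1)
    _ = (∑ j ∈ Finset.range (k+1),
          ((∑ i ∈ Finset.range (k+1), (k.choose i : ℝ) * m^(k-i) * rWhitney m r i j) * x^(j+1)
            + r * (rWhitney m r k (j+1) * x^(j+1))))
        + r * (rWhitney m r k 0 * x^0) := by
        refine congrArg₂ (· + ·) (Finset.sum_congr rfl fun j _ => by rw [hW j]; ring) ?_
        rw [show rWhitney m r (k+1) 0 = r * rWhitney m r k 0 from rfl]; ring
    _ = (∑ j ∈ Finset.range (k+1),
          (∑ i ∈ Finset.range (k+1), (k.choose i : ℝ) * m^(k-i) * rWhitney m r i j) * x^(j+1))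
        + r * ((∑ j ∈ Finset.range (k+1), rWhitney m r k (j+1) * x^(j+1))
            + rWhitney m r k 0 * x^0) := by
        rw [Finset.sum_add_distrib, ← Finset.mul_sum]; ring
    _ = (∑ j ∈ Finset.range (k+1),
          (∑ i ∈ Finset.range (k+1), (k.choose i : ℝ) * m^(k-i) * rWhitney m r i j) * x^(j+1))
        + r * rDowling m r k x := by
        congr 1
        rw [← Finset.sum_range_succ' (fun j => rWhitney m r k j * x^j) (k+1),
          Finset.sum_range_succ, rWhitney_zero_of_lt m r k (k+1) (by omega), rDowling]
        ring
    _ = (x * ∑ i ∈ Finset.range (k+1), (k.choose i : ℝ) * m ^ (k-i) * rDowling m r i x)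
        + r * rDowling m r k x := by
        congr 1
        calc ∑ j ∈ Finset.range (k+1),
              (∑ i ∈ Finset.range (k+1), (k.choose i : ℝ) * m^(k-i) * rWhitney m r i j) * x^(j+1)
            = ∑ j ∈ Finset.range (k+1), ∑ i ∈ Finset.range (k+1),
                (k.choose i : ℝ) * m^(k-i) * rWhitney m r i j * x^(j+1) := by
              exact Finset.sum_congr rfl fun j _ => Finset.sum_mul _ _ _
          _ = ∑ i ∈ Finset.range (k+1), ∑ j ∈ Finset.range (k+1),
                (k.choose i : ℝ) * m^(k-i) * rWhitney m r i j * x^(j+1) := Finset.sum_comm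
          _ = ∑ i ∈ Finset.range (k+1),
                x * ((k.choose i : ℝ) * m^(k-i) * ∑ j ∈ Finset.range (k+1), rWhitney m r i j * x^j) := by
              refine Finset.sum_congr rfl fun i _ => ?_
              rw [Finset.mul_sum, Finset.mul_sum]
              refine Finset.sum_congr rfl fun j _ => ?_
              rw [pow_succ]; ring
          _ = x * ∑ i ∈ Finset.range (k+1), (k.choose i : ℝ) * m ^ (k-i) * rDowling m r i x := by
              rw [Finset.mul_sum]
              refine Finset.sum_congr rfl fun i hi => ?_
              rw [Finset.mem_range] at hi
              rw [rDowling_trunc m r x (by omega : i ≤ k)]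
    _ = r * rDowling m r k x
        + x * ∑ i ∈ Finset.range (k+1), (k.choose i : ℝ) * m ^ (k-i) * rDowling m r i x := by ring

lemma vandermonde_sum (a b : ℝ) (f : ℕ → ℝ) (n : ℕ) :
    ∑ k ∈ Finset.range (n+1), (n.choose k : ℝ) * a^(n-k) *
        ∑ i ∈ Finset.range (k+1), (k.choose i : ℝ) * b^(k-i) * f i
      = ∑ i ∈ Finset.range (n+1), (n.choose i : ℝ) * (a+b)^(n-i) * f i := by
  calc ∑ k ∈ Finset.range (n+1), (n.choose k : ℝ) * a^(n-k) *
        ∑ i ∈ Finset.range (k+1), (k.choose i : ℝ) * b^(k-i) * f i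
      = ∑ k ∈ Finset.range (n+1), ∑ i ∈ Finset.range (n+1),
          (n.choose k : ℝ) * a^(n-k) * ((k.choose i : ℝ) * b^(k-i) * f i) := by
        refine Finset.sum_congr rfl fun k hk => ?_
        rw [Finset.mem_range] at hk
        rw [← Finset.mul_sum]
        congr 1
        refine Finset.sum_subset (by intro i hi; rw [Finset.mem_range] at *; omega) ?_
        intro i _ hi
        rw [Finset.mem_range] at hi
        rw [Nat.choose_eq_zero_of_lt (by omega)]
        push_cast; ring
    _ = ∑ i ∈ Finset.range (n+1), ∑ k ∈ Finset.range (n+1),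
          (n.choose k : ℝ) * a^(n-k) * ((k.choose i : ℝ) * b^(k-i) * f i) := Finset.sum_comm
    _ = ∑ i ∈ Finset.range (n+1), (n.choose i : ℝ) * (a+b)^(n-i) * f i := by
        refine Finset.sum_congr rfl fun i hi => ?_
        rw [Finset.mem_range] at hi
        have hstep1 : ∑ k ∈ Finset.range (n+1),
              (n.choose k : ℝ) * a^(n-k) * ((k.choose i : ℝ) * b^(k-i) * f i)
            = ∑ k ∈ Finset.Ico i (n+1),
              (n.choose k : ℝ) * a^(n-k) * ((k.choose i : ℝ) * b^(k-i) * f i) := by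
          symm
          refine Finset.sum_subset (by intro k hk; rw [Finset.mem_Ico] at hk; rw [Finset.mem_range]; omega) ?_
          intro k hk hk2
          rw [Finset.mem_range] at hk
          rw [Finset.mem_Ico] at hk2
          rw [Nat.choose_eq_zero_of_lt (by omega : k < i)]
          push_cast; ring
        rw [hstep1, Finset.sum_Ico_eq_sum_range]
        have hstep2 : ∀ t ∈ Finset.range (n+1-i),
            (n.choose (i+t) : ℝ) * a^(n-(i+t)) * (((i+t).choose i : ℝ) * b^(i+t-i) * f i)
            = (n.choose i : ℝ) * ((n-i).choose t : ℝ) * (a^((n-i)-t) * b^t) * f i := by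
          intro t ht
          rw [Finset.mem_range] at ht
          have hc := Nat.choose_mul (n := n) (show i ≤ i + t by omega)
          have hc' : (n.choose (i+t) : ℝ) * ((i+t).choose i : ℝ) = (n.choose i : ℝ) * ((n-i).choose (i+t-i) : ℝ) := by
            exact_mod_cast congrArg (Nat.cast (R := ℝ)) hc
          rw [show i + t - i = t by omega] at hc'
          rw [show n - (i+t) = (n-i) - t by omega, show i + t - i = t by omega]
          calc (n.choose (i+t) : ℝ) * a^((n-i)-t) * (((i+t).choose i : ℝ) * b^t * f i)
              = ((n.choose (i+t) : ℝ) * ((i+t).choose i : ℝ)) * (a^((n-i)-t) * b^t) * f i := by ring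
            _ = (n.choose i : ℝ) * ((n-i).choose t : ℝ) * (a^((n-i)-t) * b^t) * f i := by rw [hc']
        rw [Finset.sum_congr rfl hstep2]
        have hrange : n + 1 - i = (n - i) + 1 := by omega
        rw [hrange]
        have hpow : (a+b)^(n-i) = ∑ t ∈ Finset.range ((n-i)+1), ((n-i).choose t : ℝ) * (a^((n-i)-t) * b^t) := by
          rw [add_comm a b, add_pow]
          refine Finset.sum_congr rfl fun t ht => by ring
        rw [hpow, Finset.mul_sum, Finset.sum_mul]
        refine Finset.sum_congr rfl fun t ht => by ring

noncomputable def Ssum (m r x a : ℝ) (n : ℕ) : ℝ :=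
  ∑ k ∈ Finset.range (n+1), (n.choose k : ℝ) * a^(n-k) * rDowling m r k x

lemma Ssum_succ (m r x a : ℝ) (n : ℕ) :
    Ssum m r x a (n+1) = (a + r) * Ssum m r x a n + x * Ssum m r x (a+m) n := by
  rw [Ssum, Ssum, Ssum]
  calc ∑ k ∈ Finset.range (n+1+1), ((n+1).choose k : ℝ) * a^(n+1-k) * rDowling m r k x
      = (∑ k ∈ Finset.range (n+1), ((n+1).choose (k+1) : ℝ) * a^(n+1-(k+1)) * rDowling m r (k+1) x)
        + ((n+1).choose 0 : ℝ) * a^(n+1-0) * rDowling m r 0 x := Finset.sum_range_succ' _ (n+1)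
    _ = (∑ k ∈ Finset.range (n+1), ((n.choose k : ℝ) * a^(n-k) * rDowling m r (k+1) x
          + (n.choose (k+1) : ℝ) * a^(n+1-(k+1)) * rDowling m r (k+1) x))
        + (n.choose 0 : ℝ) * a^(n+1-0) * rDowling m r 0 x := by
        rw [Nat.choose_zero_right, Nat.choose_zero_right]
        refine congrArg (· + _) (Finset.sum_congr rfl fun k hk => ?_)
        rw [Nat.choose_succ_succ, Nat.succ_sub_succ]
        push_cast; ring
    _ = (∑ k ∈ Finset.range (n+1), (n.choose k : ℝ) * a^(n-k) * rDowling m r (k+1) x)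
        + ((∑ k ∈ Finset.range (n+1), (n.choose (k+1) : ℝ) * a^(n+1-(k+1)) * rDowling m r (k+1) x)
          + (n.choose 0 : ℝ) * a^(n+1-0) * rDowling m r 0 x) := by
        rw [Finset.sum_add_distrib]; ring
    _ = (∑ k ∈ Finset.range (n+1), (n.choose k : ℝ) * a^(n-k) * rDowling m r (k+1) x)
        + ∑ k ∈ Finset.range (n+2), (n.choose k : ℝ) * a^(n+1-k) * rDowling m r k x := by
        rw [← Finset.sum_range_succ' (fun k => (n.choose k : ℝ) * a^(n+1-k) * rDowling m r k x) (n+1)]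
    _ = (∑ k ∈ Finset.range (n+1), (n.choose k : ℝ) * a^(n-k) * rDowling m r (k+1) x)
        + a * ∑ k ∈ Finset.range (n+1), (n.choose k : ℝ) * a^(n-k) * rDowling m r k x := by
        congr 1
        rw [Finset.sum_range_succ, Nat.choose_succ_self, Finset.mul_sum]
        push_cast
        rw [zero_mul, zero_mul, add_zero]
        refine Finset.sum_congr rfl fun k hk => ?_
        rw [Finset.mem_range] at hk
        rw [show n + 1 - k = (n - k) + 1 by omega, pow_succ]
        ring
    _ = ((r * ∑ k ∈ Finset.range (n+1), (n.choose k : ℝ) * a^(n-k) * rDowling m r k x)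
          + x * ∑ k ∈ Finset.range (n+1), (n.choose k : ℝ) * a^(n-k) *
              ∑ i ∈ Finset.range (k+1), (k.choose i : ℝ) * m^(k-i) * rDowling m r i x)
        + a * ∑ k ∈ Finset.range (n+1), (n.choose k : ℝ) * a^(n-k) * rDowling m r k x := by
        congr 1
        calc ∑ k ∈ Finset.range (n+1), (n.choose k : ℝ) * a^(n-k) * rDowling m r (k+1) x
            = ∑ k ∈ Finset.range (n+1), ((r * ((n.choose k : ℝ) * a^(n-k) * rDowling m r k x))
                + x * ((n.choose k : ℝ) * a^(n-k) *
                    ∑ i ∈ Finset.range (k+1), (k.choose i : ℝ) * m^(k-i) * rDowling m r i x)) := by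
              refine Finset.sum_congr rfl fun k hk => ?_
              rw [rDowling_succ m r x k]; ring
          _ = _ := by rw [Finset.sum_add_distrib, ← Finset.mul_sum, ← Finset.mul_sum]
    _ = (a + r) * (∑ k ∈ Finset.range (n+1), (n.choose k : ℝ) * a^(n-k) * rDowling m r k x)
        + x * ∑ k ∈ Finset.range (n+1), (n.choose k : ℝ) * (a+m)^(n-k) * rDowling m r k x := by
        rw [vandermonde_sum a m (fun i => rDowling m r i x) n]
        ring

noncomputable def Tsum (m r x : ℝ) (ℓ n : ℕ) : ℝ :=
  ∑ j ∈ Finset.range (ℓ+1), rWhitney m r ℓ j * x^j * Ssum m r x (m * j) n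

lemma Ssum_zero (m r x : ℝ) (n : ℕ) : Ssum m r x 0 n = rDowling m r n x := by
  rw [Ssum]
  rw [Finset.sum_eq_single_of_mem n (Finset.self_mem_range_succ n)]
  · rw [Nat.sub_self, pow_zero, Nat.choose_self]
    push_cast; ring
  · intro k hk hkn
    rw [Finset.mem_range] at hk
    rw [zero_pow (show n - k ≠ 0 by omega)]
    ring

lemma Tsum_zero (m r x : ℝ) (n : ℕ) : Tsum m r x 0 n = rDowling m r n x := by
  rw [Tsum]
  rw [Finset.sum_range_one]
  rw [show rWhitney m r 0 0 = 1 from rfl, Nat.cast_zero, mul_zero, Ssum_zero, pow_zero]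
  ring

lemma Tsum_succ (m r x : ℝ) (ℓ n : ℕ) : Tsum m r x ℓ (n+1) = Tsum m r x (ℓ+1) n := by
  rw [Tsum, Tsum]
  calc ∑ j ∈ Finset.range (ℓ+1), rWhitney m r ℓ j * x^j * Ssum m r x (m * j) (n+1)
      = ∑ j ∈ Finset.range (ℓ+1),
          ((m * j + r) * (rWhitney m r ℓ j * x^j * Ssum m r x (m * j) n)
            + rWhitney m r ℓ j * (x^(j+1) * Ssum m r x (m * (j+1 : ℕ)) n)) := by
        refine Finset.sum_congr rfl fun j hj => ?_
        rw [Ssum_succ]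
        rw [show m * ((j:ℝ)) + m = m * ((j+1 : ℕ) : ℝ) by push_cast; ring]
        rw [pow_succ]
        ring
    _ = (∑ j ∈ Finset.range (ℓ+1), (m * j + r) * (rWhitney m r ℓ j * x^j * Ssum m r x (m * j) n))
        + ∑ j ∈ Finset.range (ℓ+1), rWhitney m r ℓ j * (x^(j+1) * Ssum m r x (m * (j+1 : ℕ)) n) :=
        Finset.sum_add_distrib
    _ = ∑ j ∈ Finset.range (ℓ+1+1), rWhitney m r (ℓ+1) j * x^j * Ssum m r x (m * j) n := by
        rw [Finset.sum_range_succ' (fun j => rWhitney m r (ℓ+1) j * x^j * Ssum m r x (m * j) n) (ℓ+1)]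
        have h1 : ∀ j ∈ Finset.range (ℓ+1),
            rWhitney m r (ℓ+1) (j+1) * x^(j+1) * Ssum m r x (m * ((j+1 : ℕ) : ℝ)) n
            = rWhitney m r ℓ j * (x^(j+1) * Ssum m r x (m * ((j+1:ℕ) : ℝ)) n)
              + (m * ((j+1:ℕ):ℝ) + r) * (rWhitney m r ℓ (j+1) * x^(j+1) * Ssum m r x (m * ((j+1:ℕ):ℝ)) n) := by
          intro j hj
          rw [show rWhitney m r (ℓ+1) (j+1) = rWhitney m r ℓ j + (m * ((j:ℝ)+1) + r) * rWhitney m r ℓ (j+1) from rfl]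
          push_cast
          ring
        rw [Finset.sum_congr rfl h1, Finset.sum_add_distrib]
        have h2 : (∑ j ∈ Finset.range (ℓ+1),
              (m * ((j+1:ℕ):ℝ) + r) * (rWhitney m r ℓ (j+1) * x^(j+1) * Ssum m r x (m * ((j+1:ℕ):ℝ)) n))
            + rWhitney m r (ℓ+1) 0 * x^0 * Ssum m r x (m * ((0:ℕ):ℝ)) n
            = ∑ j ∈ Finset.range (ℓ+1),
              (m * j + r) * (rWhitney m r ℓ j * x^j * Ssum m r x (m * j) n) := by
          have g0 : rWhitney m r (ℓ+1) 0 * x^0 * Ssum m r x (m * ((0:ℕ):ℝ)) n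
              = (m * ((0:ℕ):ℝ) + r) * (rWhitney m r ℓ 0 * x^0 * Ssum m r x (m * ((0:ℕ):ℝ)) n) := by
            rw [show rWhitney m r (ℓ+1) 0 = r * rWhitney m r ℓ 0 from rfl]
            push_cast
            ring
          rw [g0, ← Finset.sum_range_succ' (fun j => (m * (j:ℝ) + r) * (rWhitney m r ℓ j * x^j * Ssum m r x (m * (j:ℝ)) n)) (ℓ+1)]
          rw [Finset.sum_range_succ]
          rw [rWhitney_zero_of_lt m r ℓ (ℓ+1) (by omega)]
          ring
        rw [add_assoc, h2]
        ring

theorem rDowling_spivey (n ℓ : ℕ) (m r x : ℝ) :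
    rDowling m r (n + ℓ) x =
      ∑ j ∈ Finset.range (ℓ + 1), ∑ k ∈ Finset.range (n + 1),
        rWhitney m r ℓ j * (n.choose k : ℝ) * (m * j) ^ (n - k) *
          rDowling m r k x * x ^ j := by
  have key : ∀ ℓ n : ℕ, rDowling m r (n + ℓ) x = Tsum m r x ℓ n := by
    intro ℓ
    induction ℓ with
    | zero => intro n; rw [Nat.add_zero, Tsum_zero]
    | succ ℓ ih =>
      intro n
      rw [show n + (ℓ+1) = (n+1) + ℓ by omega, ih (n+1), Tsum_succ]
  rw [key ℓ n, Tsum]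
  refine Finset.sum_congr rfl fun j hj => ?_
  rw [Ssum, Finset.mul_sum]
  refine Finset.sum_congr rfl fun k hk => ?_
  ring
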